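/- Let G be a group, H a normal subgroup of finite index, and N a nilpotent G-group all of whose lower central series quotients γ_i(N)/γ_{i+1}(N) are uniquely divisible abelian groups. Then the restriction map H¹(G, N) → H¹(H, N) on non-abelian first cohomology is injective. -/

import Mathlib

/-- A 1-cocycle of a group `G` acting on a group `N` via `φ`. -/
def IsCocycle {G N : Type*} [Group G] [Group N] (φ : G →* MulAut N) (α : G → N) : Prop :=
  ∀ g h : G, α (g * h) = α g * φ g (α h)

/-- Two maps `G → N` are cohomologous. -/
def Cohomologous {G N : Type*} [Group G] [Group N] (φ : G →* MulAut N) (α β : G → N) : Prop :=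
  ∃ n : N, ∀ g : G, β g = n⁻¹ * α g * φ g n


namespace RestrInj

variable {N : Type*} [Group N]

local notation "γ" => Subgroup.lowerCentralSeries (⊤ : Subgroup N)


lemma lcs_aut_mem (f : MulAut N) {i : ℕ} {x : N} (hx : x ∈ γ i) : f x ∈ γ i :=
  Subgroup.lowerCentralSeries.map f.toMonoidHom i (Subgroup.mem_map_of_mem _ hx)

open scoped commutatorElement in
lemma comm_mem_lcs {i : ℕ} {x : N} (hx : x ∈ γ i) (y : N) :
    y⁻¹ * x⁻¹ * y * x ∈ γ (i + 1) := by
  have h : (⁅y⁻¹, x⁻¹⁆ : N) ∈ ⁅(⊤ : Subgroup N), γ i⁆ :=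
    Subgroup.commutator_mem_commutator (Subgroup.mem_top y⁻¹) (inv_mem hx)
  rw [Subgroup.commutator_comm] at h
  have heq : γ (i+1) = ⁅γ i, (⊤ : Subgroup N)⁆ := rfl
  rw [heq]
  simpa [commutatorElement_def, mul_assoc] using h

lemma commute_mk_lcs {i : ℕ} {x : N} (hx : x ∈ γ i) (y : N) :
    Commute ((QuotientGroup.mk' (γ (i+1))) x) ((QuotientGroup.mk' (γ (i+1))) y) := by
  rw [Commute, SemiconjBy, ← map_mul, ← map_mul, QuotientGroup.mk'_apply,
    QuotientGroup.mk'_apply, QuotientGroup.eq]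
  simpa [mul_assoc] using comm_mem_lcs hx y

lemma root_approx (hdiv : ∀ i : ℕ, ∀ x ∈ γ i, ∀ m : ℕ, 0 < m →
      ∃ y ∈ γ i, x⁻¹ * y ^ m ∈ γ (i + 1)) (n : ℕ) :
    ∀ i : ℕ, ∀ x ∈ γ i, ∀ m : ℕ, 0 < m →
      ∃ y ∈ γ i, x⁻¹ * y ^ m ∈ γ (i + n) := by
  induction n with
  | zero => exact fun i x hx m _ => ⟨1, one_mem _, by simpa using inv_mem hx⟩
  | succ n ih =>
    intro i x hx m hm
    obtain ⟨y, hy, hu⟩ := ih i x hx m hm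
    have hui : (x⁻¹ * y ^ m)⁻¹ ∈ γ (i + n) := inv_mem hu
    obtain ⟨c, hc, hcu⟩ := hdiv (i + n) _ hui m hm
    have hcγ : c ∈ γ i := Subgroup.lowerCentralSeries_antitone _ (Nat.le_add_right i n) hc
    refine ⟨y * c, mul_mem hy hcγ, ?_⟩
    set π := QuotientGroup.mk' (γ (i + n + 1)) with hπ
    rw [inv_inv] at hcu
    have h1 : π (x⁻¹ * y ^ m * c ^ m) = 1 := (QuotientGroup.eq_one_iff _).mpr hcu
    have hcom : Commute (π c) (π y) := commute_mk_lcs hc y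
    have h2 : π (x⁻¹ * (y * c) ^ m) = 1 := by
      rw [map_mul, map_pow, map_mul, hcom.symm.mul_pow]
      rw [map_mul, map_mul, map_pow, map_pow] at h1
      rw [← mul_assoc]; exact h1
    exact (QuotientGroup.eq_one_iff _).mp h2

lemma root_exists (hdiv : ∀ i : ℕ, ∀ x ∈ γ i, ∀ m : ℕ, 0 < m →
      ∃ y ∈ γ i, x⁻¹ * y ^ m ∈ γ (i + 1))
    {n₀ : ℕ} (hbot : γ n₀ = ⊥) {i : ℕ} {x : N} (hx : x ∈ γ i) {m : ℕ} (hm : 0 < m) :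
    ∃ y ∈ γ i, y ^ m = x := by
  obtain ⟨y, hy, hmem⟩ := root_approx hdiv n₀ i x hx m hm
  have : γ (i + n₀) = ⊥ := le_bot_iff.mp (hbot ▸ Subgroup.lowerCentralSeries_antitone _ (Nat.le_add_left n₀ i))
  rw [this, Subgroup.mem_bot, inv_mul_eq_one] at hmem
  exact ⟨y, hy, hmem.symm⟩

lemma root_unique (huniq : ∀ i : ℕ, ∀ m : ℕ, 0 < m → ∀ y ∈ γ i, ∀ z ∈ γ i,
      (y ^ m)⁻¹ * z ^ m ∈ γ (i + 1) → y⁻¹ * z ∈ γ (i + 1))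
    {n₀ : ℕ} (hbot : γ n₀ = ⊥) {m : ℕ} (hm : 0 < m) {y z : N} (h : y ^ m = z ^ m) :
    y = z := by
  have key : ∀ n : ℕ, y⁻¹ * z ∈ γ n := by
    intro n
    induction n with
    | zero => simp [Subgroup.lowerCentralSeries_zero]
    | succ n ih =>
      set π := QuotientGroup.mk' (γ (n + 1)) with hπ
      have hcom : Commute (π (y⁻¹ * z)) (π y) := commute_mk_lcs ih y
      have hpow : (y⁻¹ * z) ^ m ∈ γ (n + 1) := by
        have hyz : π z = π y * π (y⁻¹ * z) := by rw [← map_mul]; group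
        have h2 : π (z ^ m) = π (y ^ m) * π ((y⁻¹ * z) ^ m) := by
          simp only [map_pow]; rw [hyz, hcom.symm.mul_pow]
        rw [← h] at h2
        have h3 : π ((y⁻¹ * z) ^ m) = 1 := mul_left_cancel (a := π (y ^ m)) (by rw [← h2, mul_one])
        exact (QuotientGroup.eq_one_iff _).mp h3
      have h4 := huniq n m hm (y⁻¹ * z) ih 1 (one_mem _) (by simpa using inv_mem hpow)
      have h5 : z⁻¹ * y ∈ γ (n + 1) := by simpa using h4
      simpa [mul_inv_rev] using inv_mem h5
  have := key n₀
  rw [hbot, Subgroup.mem_bot, inv_mul_eq_one] at this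
  exact this


section Core

variable {G : Type*} [Group G] (ψ : G →* MulAut N) (H : Subgroup G) [H.Normal] [H.FiniteIndex]

lemma step_induction
    (hdiv : ∀ i : ℕ, ∀ x ∈ γ i, ∀ m : ℕ, 0 < m →
      ∃ y ∈ γ i, x⁻¹ * y ^ m ∈ γ (i + 1))
    (huniq : ∀ i : ℕ, ∀ m : ℕ, 0 < m → ∀ y ∈ γ i, ∀ z ∈ γ i,
      (y ^ m)⁻¹ * z ^ m ∈ γ (i + 1) → y⁻¹ * z ∈ γ (i + 1))
    {n₀ : ℕ} (hbot : γ n₀ = ⊥) (n : ℕ) :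
    ∀ i : ℕ, γ (i + n) = ⊥ → ∀ d : G → N, IsCocycle ψ d →
      (∀ h ∈ H, d h = 1) → (∀ g, d g ∈ γ i) →
      ∃ m : N, (∀ h ∈ H, ψ h m = m) ∧ ∀ g, d g = m⁻¹ * ψ g m := by
  induction n with
  | zero =>
    intro i hiz d _ _ hval
    refine ⟨1, fun h _ => map_one (ψ h), fun g => ?_⟩
    have := hval g
    rw [Nat.add_zero] at hiz
    rw [hiz, Subgroup.mem_bot] at this
    simp [this]
  | succ n ih =>
    intro i hiz d hcoc hH hval
    -- basic facts
    have hright : ∀ g : G, ∀ h ∈ H, d (g * h) = d g := by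
      intro g h hh
      rw [hcoc g h, hH h hh, map_one, mul_one]
    have hfix : ∀ h ∈ H, ∀ g : G, ψ h (d g) = d g := by
      intro h hh g
      have h1 : d (h * g) = ψ h (d g) := by
        rw [hcoc h g, hH h hh, one_mul]
      have h2 : h * g = g * (g⁻¹ * h * g) := by group
      have h3 : g⁻¹ * h * g ∈ H := by
        have := (inferInstance : H.Normal).conj_mem h hh g⁻¹
        simpa using this
      rw [h2, hright g _ h3] at h1
      exact h1.symm
    -- the abelian quotient A = γ i ⧸ γ (i+1)
    let Ki : Subgroup ↥(γ i) := (γ (i+1)).subgroupOf (γ i)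
    haveI : Ki.Normal := Subgroup.normal_subgroupOf
    let A := ↥(γ i) ⧸ Ki
    let πA : ↥(γ i) →* A := QuotientGroup.mk' Ki
    have hπA : ∀ x y : ↥(γ i), (x : N)⁻¹ * (y : N) ∈ γ (i+1) → πA x = πA y := by
      intro x y hxy
      apply (QuotientGroup.eq ..).mpr
      rwa [Subgroup.mem_subgroupOf]
    have hπA' : ∀ x y : ↥(γ i), πA x = πA y → (x : N)⁻¹ * (y : N) ∈ γ (i+1) := by
      intro x y hxy
      have := (QuotientGroup.eq ..).mp hxy
      rwa [Subgroup.mem_subgroupOf] at this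
    have comm : ∀ a b : A, a * b = b * a := by
      intro a b
      induction a using QuotientGroup.induction_on with | H x =>
      induction b using QuotientGroup.induction_on with | H y =>
      show πA (x * y) = πA (y * x)
      apply hπA
      have := comm_mem_lcs (x := (x : N)) x.2 (y : N)
      simpa [mul_assoc] using this
    letI : CommGroup A := { (inferInstance : Group A) with mul_comm := comm }
    -- the action of G on γ i and on A
    let ρ : G → (↥(γ i) →* ↥(γ i)) := fun g =>
      { toFun := fun x => ⟨ψ g (x : N), lcs_aut_mem (ψ g) x.2⟩
        map_one' := by ext; simp
        map_mul' := by intro x y; ext; simp }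
    have hρ : ∀ (g : G) (x : ↥(γ i)), ((ρ g x : ↥(γ i)) : N) = ψ g (x : N) := fun g x => rfl
    let τ : G → (A →* A) := fun g => QuotientGroup.map Ki Ki (ρ g) (by
      intro x hx
      rw [Subgroup.mem_comap, Subgroup.mem_subgroupOf]
      rw [Subgroup.mem_subgroupOf] at hx
      exact lcs_aut_mem (ψ g) hx)
    have hτ : ∀ (g : G) (x : ↥(γ i)), τ g (πA x) = πA (ρ g x) := by
      intro g x
      exact QuotientGroup.map_mk' ..
    -- the cocycle at level A
    let dP : G → ↥(γ i) := fun g => ⟨d g, hval g⟩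
    let e : G → A := fun g => πA (dP g)
    have e_coc : ∀ g g' : G, e (g * g') = e g * τ g (e g') := by
      intro g g'
      rw [hτ]
      show πA ⟨d (g * g'), _⟩ = πA (dP g * ρ g (dP g'))
      congr 1
      ext
      simp [dP, hρ, hcoc g g']
    have e_right : ∀ g : G, ∀ h ∈ H, e (g * h) = e g := by
      intro g h hh
      show πA ⟨d (g * h), _⟩ = πA ⟨d g, _⟩
      congr 2
      exact hright g h hh
    have τ_fix : ∀ h ∈ H, ∀ g : G, τ h (e g) = e g := by
      intro h hh g
      rw [hτ]
      show πA (ρ h (dP g)) = πA (dP g)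
      congr 1
      ext
      simp [dP, hρ, hfix h hh g]
    -- averaging over the finite quotient G ⧸ H
    letI : Fintype (G ⧸ H) := Fintype.ofFinite _
    set k := Fintype.card (G ⧸ H) with hk
    have hkpos : 0 < k := Fintype.card_pos
    let E : G ⧸ H → A := fun q => e q.out
    have E_mk : ∀ g : G, E (QuotientGroup.mk g) = e g := by
      intro g
      have hout : (QuotientGroup.mk g : G ⧸ H).out = g * (g⁻¹ * (QuotientGroup.mk g : G ⧸ H).out) := by
        group
      have hmem : g⁻¹ * (QuotientGroup.mk g : G ⧸ H).out ∈ H := by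
        rw [← QuotientGroup.eq]
        exact (QuotientGroup.out_eq' _).symm
      show e _ = e g
      rw [hout, e_right g _ hmem]
    let S : A := ∏ q : G ⧸ H, E q
    have key : ∀ g : G, (e g) ^ k = S * (τ g S)⁻¹ := by
      intro g
      have h1 : ∏ q : G ⧸ H, E (g • q) = S := by
        exact Equiv.prod_comp (MulAction.toPerm g) E
      have h2 : ∀ q : G ⧸ H, E (g • q) = e g * τ g (E q) := by
        intro q
        have : g • q = QuotientGroup.mk (g * q.out) := by
          have := MulAction.Quotient.mk_smul_out H g q
          rw [smul_eq_mul] at this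
          exact this.symm
        rw [this, E_mk, e_coc]
      rw [Finset.prod_congr rfl (fun q _ => h2 q), Finset.prod_mul_distrib,
        Finset.prod_const, ← map_prod] at h1
      rw [Finset.card_univ, ← hk] at h1
      exact eq_mul_inv_iff_mul_eq.mpr h1
    have SH : ∀ h ∈ H, τ h S = S := by
      intro h hh
      show τ h (∏ q : G ⧸ H, E q) = _
      rw [map_prod]
      exact Finset.prod_congr rfl fun q _ => τ_fix h hh q.out
    -- an honest representative of S, fixed by ψ(H)
    let l := (Finset.univ (α := G ⧸ H)).toList
    let σP : ↥(γ i) := (l.map (fun q => dP q.out)).prod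
    have hσS : πA σP = S := by
      show πA ((l.map (fun q => dP q.out)).prod) = S
      rw [map_list_prod, List.map_map]
      have h5 : (πA ∘ fun q => dP q.out) = E := rfl
      rw [h5]
      exact Finset.prod_map_toList _ _
    have hσfix : ∀ h ∈ H, ψ h (σP : N) = σP := by
      intro h hh
      have hcomp : ρ h σP = σP := by
        show (ρ h) ((l.map fun q => dP q.out).prod) = _
        rw [map_list_prod, List.map_map]
        congr 1
        apply List.map_congr_left
        intro q _
        show ρ h (dP q.out) = dP q.out
        ext
        rw [hρ]
        exact hfix h hh q.out
      calc ψ h (σP : N) = ((ρ h σP : ↥(γ i)) : N) := (hρ h σP).symm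
        _ = σP := by rw [hcomp]
    -- the k-th root of σP⁻¹
    have hσinv : ((σP : N))⁻¹ ∈ γ i := inv_mem σP.2
    obtain ⟨m₀, hm₀mem, hm₀pow⟩ := root_exists hdiv hbot hσinv hkpos
    have hm₀fix : ∀ h ∈ H, ψ h m₀ = m₀ := by
      intro h hh
      refine root_unique huniq hbot hkpos (y := ψ h m₀) (z := m₀) ?_
      rw [← map_pow, hm₀pow, map_inv, hσfix h hh]
    let mP : ↥(γ i) := ⟨m₀, hm₀mem⟩
    have hμk : πA mP ^ k = S⁻¹ := by
      rw [← map_pow]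
      have : mP ^ k = σP⁻¹ := by
        ext
        push_cast
        exact hm₀pow
      rw [this, map_inv, hσS]
    have uniqA : ∀ x y : ↥(γ i), πA x ^ k = πA y ^ k → πA x = πA y := by
      intro x y hxy
      rw [← map_pow, ← map_pow] at hxy
      have h6 := hπA' _ _ hxy
      apply hπA
      refine huniq i k hkpos _ x.2 _ y.2 ?_
      push_cast at h6
      exact h6
    -- e g = μ⁻¹ * τ g μ
    have main : ∀ g : G, πA (dP g) = πA (mP⁻¹ * ρ g mP) := by
      intro g
      apply uniqA
      have hL : πA (dP g) ^ k = S * (τ g S)⁻¹ := key g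
      have hR : πA (mP⁻¹ * ρ g mP) ^ k = S * (τ g S)⁻¹ := by
        rw [map_mul, map_inv, ← hτ, mul_pow, inv_pow, hμk, ← map_pow, hμk, map_inv, inv_inv]
      rw [hL, hR]
    have hw : ∀ g : G, (d g)⁻¹ * (m₀⁻¹ * ψ g m₀) ∈ γ (i + 1) := by
      intro g
      have h7 := hπA' _ _ (main g)
      push_cast at h7
      convert h7 using 2
      rfl
    -- the twisted cocycle with values in γ (i+1)
    let d' : G → N := fun g => m₀ * d g * (ψ g m₀)⁻¹
    have d'coc : IsCocycle ψ d' := by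
      intro g g'
      show m₀ * d (g * g') * (ψ (g * g') m₀)⁻¹ = _
      rw [hcoc g g', map_mul ψ g g', MulAut.mul_apply]
      show _ = (m₀ * d g * (ψ g m₀)⁻¹) * ψ g (m₀ * d g' * (ψ g' m₀)⁻¹)
      rw [map_mul, map_mul, map_inv]
      group
    have d'H : ∀ h ∈ H, d' h = 1 := by
      intro h hh
      show m₀ * d h * (ψ h m₀)⁻¹ = 1
      rw [hH h hh, hm₀fix h hh]
      group
    have d'mem : ∀ g, d' g ∈ γ (i + 1) := by
      intro g
      have w := hw g
      have hconj := Subgroup.Normal.conj_mem (Subgroup.lowerCentralSeries_normal _ (i+1))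
        _ (inv_mem w) (m₀ * d g)
      have heq : d' g = (m₀ * d g) * ((d g)⁻¹ * (m₀⁻¹ * ψ g m₀))⁻¹ * (m₀ * d g)⁻¹ := by
        show m₀ * d g * (ψ g m₀)⁻¹ = _
        group
      rw [heq]
      convert hconj using 1
    -- conclude by induction
    have hiz' : γ ((i + 1) + n) = ⊥ := by
      rw [Nat.succ_add]
      rw [Nat.add_succ] at hiz
      exact hiz
    obtain ⟨m₁, hm₁fix, hm₁⟩ := ih (i + 1) hiz' d' d'coc d'H d'mem
    refine ⟨m₁ * m₀, fun h hh => by rw [map_mul, hm₁fix h hh, hm₀fix h hh], fun g => ?_⟩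
    have h8 := hm₁ g
    have hd : d g = m₀⁻¹ * d' g * ψ g m₀ := by
      show _ = m₀⁻¹ * (m₀ * d g * (ψ g m₀)⁻¹) * ψ g m₀
      group
    rw [hd, h8, map_mul, mul_inv_rev]
    group

lemma twist_cocycle {d : G → N} (hcoc : IsCocycle ψ d) (m : N) :
    IsCocycle ψ (fun g => m * d g * (ψ g m)⁻¹) := by
  intro g g'
  show m * d (g * g') * (ψ (g * g') m)⁻¹ = _
  rw [hcoc g g', map_mul ψ g g', MulAut.mul_apply]
  show _ = (m * d g * (ψ g m)⁻¹) * ψ g (m * d g' * (ψ g' m)⁻¹)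
  rw [map_mul, map_mul, map_inv]
  group

lemma core [Group.IsNilpotent N]
    (hdiv : ∀ i : ℕ, ∀ x ∈ γ i, ∀ m : ℕ, 0 < m →
      ∃ y ∈ γ i, x⁻¹ * y ^ m ∈ γ (i + 1))
    (huniq : ∀ i : ℕ, ∀ m : ℕ, 0 < m → ∀ y ∈ γ i, ∀ z ∈ γ i,
      (y ^ m)⁻¹ * z ^ m ∈ γ (i + 1) → y⁻¹ * z ∈ γ (i + 1))
    (d : G → N) (hcoc : IsCocycle ψ d) (hH : ∀ h ∈ H, d h = 1) :
    ∃ m : N, ∀ g, d g = m⁻¹ * ψ g m := by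
  obtain ⟨n₀, hbot⟩ := Subgroup.nilpotent_iff_lowerCentralSeries.mp (inferInstance : Group.IsNilpotent N)
  obtain ⟨m, _, hm⟩ := step_induction ψ H hdiv huniq hbot n₀ 0
    (by rwa [Nat.zero_add]) d hcoc hH (fun g => by simp)
  exact ⟨m, hm⟩

end Core
end RestrInj

/-- If `H ⊴ G` has finite index and `N` is a nilpotent `G`-group all of whose lower
central series quotients are uniquely divisible abelian groups, then the restriction map
`H¹(G, N) → H¹(H, N)` is injective: two cocycles on `G` which become cohomologous after
restriction to `H` are already cohomologous on `G`. -/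
theorem restriction_injective_of_finite_index
    {G N : Type*} [Group G] [Group N] (φ : G →* MulAut N)
    (H : Subgroup G) [H.Normal] [H.FiniteIndex]
    [Group.IsNilpotent N]
    (h_div : ∀ i : ℕ, ∀ x ∈ (⊤ : Subgroup N).lowerCentralSeries i, ∀ m : ℕ, 0 < m →
      ∃ y ∈ (⊤ : Subgroup N).lowerCentralSeries i, x⁻¹ * y ^ m ∈ (⊤ : Subgroup N).lowerCentralSeries (i + 1))
    (h_uniq : ∀ i : ℕ, ∀ m : ℕ, 0 < m → ∀ y ∈ (⊤ : Subgroup N).lowerCentralSeries i,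
      ∀ z ∈ (⊤ : Subgroup N).lowerCentralSeries i,
      (y ^ m)⁻¹ * z ^ m ∈ (⊤ : Subgroup N).lowerCentralSeries (i + 1) →
        y⁻¹ * z ∈ (⊤ : Subgroup N).lowerCentralSeries (i + 1)) :
    ∀ α α' : G → N, IsCocycle φ α → IsCocycle φ α' →
      (∃ n : N, ∀ h ∈ H, α' h = n⁻¹ * α h * φ h n) →
      Cohomologous φ α α' := by
  rintro α α' hα hα' ⟨n, hn⟩
  -- the `α`-twisted action
  let ψ : G →* MulAut N := MonoidHom.mk' (fun g => MulAut.conj (α g) * φ g) (by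
    intro a b
    ext x
    simp only [MulAut.mul_apply, MulAut.conj_apply, hα a b, map_mul, map_inv]
    )
  have hψ : ∀ g x, ψ g x = α g * φ g x * (α g)⁻¹ := fun g x => rfl
  let c : G → N := fun g => α' g * (α g)⁻¹
  have hc : IsCocycle ψ c := by
    intro g g'
    show α' (g * g') * (α (g * g'))⁻¹ = (α' g * (α g)⁻¹) * ψ g (α' g' * (α g')⁻¹)
    rw [hα g g', hα' g g', hψ, map_mul, map_inv]
    group
  let dd : G → N := fun g => n * c g * (ψ g n)⁻¹
  have hdcoc : IsCocycle ψ dd := RestrInj.twist_cocycle ψ hc n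
  have hdH : ∀ h ∈ H, dd h = 1 := by
    intro h hh
    show n * (α' h * (α h)⁻¹) * (ψ h n)⁻¹ = 1
    rw [hn h hh, hψ]
    group
  obtain ⟨m₁, hm₁⟩ := RestrInj.core ψ H h_div h_uniq dd hdcoc hdH
  refine ⟨m₁ * n, fun g => ?_⟩
  have h1 : n * c g * (ψ g n)⁻¹ = m₁⁻¹ * ψ g m₁ := hm₁ g
  have h3 : c g = n⁻¹ * (m₁⁻¹ * ψ g m₁) * ψ g n := by
    rw [← h1]
    group
  calc α' g = c g * α g := by
        show _ = α' g * (α g)⁻¹ * α g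
        group
    _ = n⁻¹ * (m₁⁻¹ * ψ g m₁) * ψ g n * α g := by rw [h3]
    _ = n⁻¹ * m₁⁻¹ * ψ g (m₁ * n) * α g := by rw [map_mul]; group
    _ = n⁻¹ * m₁⁻¹ * (α g * φ g (m₁ * n) * (α g)⁻¹) * α g := by rw [hψ]
    _ = (m₁ * n)⁻¹ * α g * φ g (m₁ * n) := by group
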